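/- Let λ > 0, ω ∈ (0, ∞], and let x, θ : ℝ → ℝ be differentiable on [0, ω) with x(0) = 0, θ(0) = 0, and satisfying for all s ∈ [0, ω): x'(s) = cos θ(s) and θ'(s) sin θ(s) = x(s)(cos θ(s) + λ). Suppose there is s₁ ∈ (0, ω) with θ(s₁) = π/2, x(s) > 0 for all s ∈ (0, s₁), and θ(s) ∈ [0, π/2] for all s ∈ [0, s₁]. Then x(s) < √2 for every s ∈ [0, s₁]. -/

import Mathlib

open Real

/-- For `λ > 0`, along a solution of the generating-curve system with
`x(0) = θ(0) = 0`, if `θ` reaches `π/2` at `s₁` with `x > 0` on `(0, s₁)` and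
`θ ∈ [0, π/2]` on `[0, s₁]`, then `x(s) < √2` on `[0, s₁]`. -/
theorem rotational_translator_radius_lt_sqrt_two
    (lam : ℝ) (hlam : 0 < lam) (ω : EReal) (hω : 0 < ω)
    (x θ θ' : ℝ → ℝ)
    (hx0 : x 0 = 0) (hθ0 : θ 0 = 0)
    (hx : ∀ s : ℝ, 0 ≤ s → (s : EReal) < ω →
      HasDerivWithinAt x (Real.cos (θ s)) {r : ℝ | 0 ≤ r ∧ (r : EReal) < ω} s)
    (hθ : ∀ s : ℝ, 0 ≤ s → (s : EReal) < ω →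
      HasDerivWithinAt θ (θ' s) {r : ℝ | 0 ≤ r ∧ (r : EReal) < ω} s)
    (heq : ∀ s : ℝ, 0 ≤ s → (s : EReal) < ω →
      θ' s * Real.sin (θ s) = x s * (Real.cos (θ s) + lam))
    (s₁ : ℝ) (hs₁pos : 0 < s₁) (hs₁ω : (s₁ : EReal) < ω)
    (hθs₁ : θ s₁ = π / 2)
    (hxpos : ∀ s ∈ Set.Ioo 0 s₁, 0 < x s)
    (hθrange : ∀ s ∈ Set.Icc 0 s₁, θ s ∈ Set.Icc 0 (π / 2)) :
    ∀ s ∈ Set.Icc 0 s₁, x s < Real.sqrt 2 := by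
  set S : Set ℝ := {r : ℝ | 0 ≤ r ∧ (r : EReal) < ω} with hSdef
  have hIccS : Set.Icc 0 s₁ ⊆ S := by
    intro r hr
    exact ⟨hr.1, lt_of_le_of_lt (EReal.coe_le_coe_iff.2 hr.2) hs₁ω⟩
  have hIooS : Set.Ioo 0 s₁ ⊆ S := fun r hr => hIccS ⟨hr.1.le, hr.2.le⟩
  have hnbhd : ∀ s ∈ Set.Ioo 0 s₁, S ∈ nhds s := fun s hs =>
    Filter.mem_of_superset (isOpen_Ioo.mem_nhds hs) hIooS
  set G : ℝ → ℝ := fun s => 1 - Real.cos (θ s) - (x s) ^ 2 / 2 with hGdef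
  have hmemω : ∀ s ∈ Set.Icc 0 s₁, (s : EReal) < ω := fun s hs => (hIccS hs).2
  -- derivative of G at interior points
  have hGderiv : ∀ s ∈ Set.Ioo 0 s₁, HasDerivAt G (lam * x s) s := by
    intro s hs
    have hsIcc : s ∈ Set.Icc 0 s₁ := ⟨hs.1.le, hs.2.le⟩
    have hθd : HasDerivAt θ (θ' s) s :=
      (hθ s hs.1.le (hmemω s hsIcc)).hasDerivAt (hnbhd s hs)
    have hxd : HasDerivAt x (Real.cos (θ s)) s :=
      (hx s hs.1.le (hmemω s hsIcc)).hasDerivAt (hnbhd s hs)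
    have hcos : HasDerivAt (fun t => Real.cos (θ t)) (-Real.sin (θ s) * θ' s) s :=
      (Real.hasDerivAt_cos (θ s)).comp s hθd
    have hsq : HasDerivAt (fun t => (x t) ^ 2 / 2)
        ((2 * x s ^ 1 * Real.cos (θ s)) / 2) s := (hxd.pow 2).div_const 2
    have h : HasDerivAt (fun t => 1 - Real.cos (θ t) - (x t) ^ 2 / 2)
        (0 - -Real.sin (θ s) * θ' s - 2 * x s ^ 1 * Real.cos (θ s) / 2) s :=
      ((hasDerivAt_const s (1 : ℝ)).sub hcos).sub hsq
    convert h using 1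
    have := heq s hs.1.le (hmemω s hsIcc)
    ring_nf
    nlinarith [this]
  -- continuity of G on [0, s₁]
  have hGC : ContinuousOn G (Set.Icc 0 s₁) := by
    have hxC : ContinuousOn x (Set.Icc 0 s₁) := fun s hs =>
      ((hx s hs.1 (hmemω s hs)).continuousWithinAt).mono hIccS
    have hθC : ContinuousOn θ (Set.Icc 0 s₁) := fun s hs =>
      ((hθ s hs.1 (hmemω s hs)).continuousWithinAt).mono hIccS
    exact (continuousOn_const.sub (Real.continuous_cos.comp_continuousOn hθC)).sub
      ((hxC.pow 2).div_const 2)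
  have hmono : StrictMonoOn G (Set.Icc 0 s₁) := by
    apply strictMonoOn_of_deriv_pos (convex_Icc 0 s₁) hGC
    intro s hs
    rw [interior_Icc] at hs
    rw [(hGderiv s hs).deriv]
    exact mul_pos hlam (hxpos s hs)
  have hG0 : G 0 = 0 := by simp [hGdef, hθ0, hx0]
  intro s hs
  rcases eq_or_lt_of_le hs.1 with h0 | h0
  · rw [← h0, hx0]
    exact Real.sqrt_pos.2 (by norm_num)
  · have hGs : 0 < G s := by
      have h := hmono (Set.left_mem_Icc.2 hs₁pos.le) hs h0
      rwa [hG0] at h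
    have hcosnn : 0 ≤ Real.cos (θ s) := by
      have hr := hθrange s hs
      have hpi : 0 < π := Real.pi_pos
      exact Real.cos_nonneg_of_mem_Icc ⟨by linarith [hr.1], hr.2⟩
    have hsq : (x s) ^ 2 < 2 := by
      have hc : Real.cos (θ s) ≤ 1 := Real.cos_le_one _
      simp only [hGdef] at hGs
      nlinarith
    nlinarith [Real.sq_sqrt (show (0:ℝ) ≤ 2 by norm_num), Real.sqrt_nonneg 2]
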